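/- Let L be an ortholattice and n ≥ 3. The following are equivalent: (i) the n-Go equation a₁ ≡γ aₙ = aₙ ≡γ a₁ holds for all a₁,…,aₙ ∈ L; (ii) a₁ ≡γ aₙ = (a₁ ≡ a₂) ⊓ (a₂ ≡ a₃) ⊓ ⋯ ⊓ (aₙ₋₁ ≡ aₙ) for all a₁,…,aₙ ∈ L; (iii) a₁ ≡γ aₙ ≤ a₁ → aₙ for all a₁,…,aₙ ∈ L; (iv) (a₁ ≡γ aₙ) ⊓ (a₁ ⊔ a₂ ⊔ ⋯ ⊔ aₙ) = a₁ ⊓ a₂ ⊓ ⋯ ⊓ aₙ for all a₁,…,aₙ ∈ L. -/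

import Mathlib

/-- An ortholattice: a bounded lattice with an orthocomplementation. -/
class Ortholattice (α : Type*) extends Lattice α, BoundedOrder α, Compl α where
  compl_compl : ∀ a : α, aᶜᶜ = a
  compl_le_compl : ∀ a b : α, a ≤ b → bᶜ ≤ aᶜ
  inf_compl_self : ∀ a : α, a ⊓ aᶜ = ⊥
  sup_compl_self : ∀ a : α, a ⊔ aᶜ = ⊤

namespace OLTools

variable {α : Type*} [Ortholattice α]

open Ortholattice

lemma cc (a : α) : aᶜᶜ = a := Ortholattice.compl_compl a

lemma compl_anti {a b : α} (h : a ≤ b) : bᶜ ≤ aᶜ := Ortholattice.compl_le_compl a b h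

lemma le_compl_iff {a b : α} : a ≤ bᶜ ↔ b ≤ aᶜ := by
  constructor
  · intro h
    have := compl_anti h
    rwa [cc] at this
  · intro h
    have := compl_anti h
    rwa [cc] at this

lemma compl_le_iff {a b : α} : aᶜ ≤ b ↔ bᶜ ≤ a := by
  constructor
  · intro h
    have := compl_anti h
    rwa [cc] at this
  · intro h
    have := compl_anti h
    rwa [cc] at this

lemma compl_le_compl_iff {a b : α} : aᶜ ≤ bᶜ ↔ b ≤ a := by
  rw [le_compl_iff, cc]

lemma compl_inj {a b : α} (h : aᶜ = bᶜ) : a = b := by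
  rw [← cc a, h, cc]

lemma ics (a : α) : a ⊓ aᶜ = ⊥ := Ortholattice.inf_compl_self a
lemma scs (a : α) : a ⊔ aᶜ = ⊤ := Ortholattice.sup_compl_self a
lemma ics' (a : α) : aᶜ ⊓ a = ⊥ := by rw [inf_comm]; exact ics a
lemma scs' (a : α) : aᶜ ⊔ a = ⊤ := by rw [sup_comm]; exact scs a

lemma compl_sup (a b : α) : (a ⊔ b)ᶜ = aᶜ ⊓ bᶜ := by
  apply le_antisymm
  · exact le_inf (compl_anti le_sup_left) (compl_anti le_sup_right)
  · rw [le_compl_iff]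
    apply sup_le
    · rw [le_compl_iff]; exact inf_le_left
    · rw [le_compl_iff]; exact inf_le_right

lemma compl_inf (a b : α) : (a ⊓ b)ᶜ = aᶜ ⊔ bᶜ := by
  apply compl_inj
  rw [cc, compl_sup, cc, cc]

lemma compl_top : (⊤ : α)ᶜ = ⊥ := by
  have := ics (⊤ : α); rwa [top_inf_eq] at this

lemma compl_bot : (⊥ : α)ᶜ = ⊤ := by
  apply compl_inj; rw [cc, compl_top]

/-- The orthomodular law as a hypothesis. -/
def OMLaw (α : Type*) [Ortholattice α] : Prop :=
  ∀ x y : α, x ≤ y → y ⊓ (yᶜ ⊔ x) ≤ x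

section OM
variable (hom : OMLaw α)
include hom

lemma om_le {z y : α} (hzy : z ≤ y) (h : y ⊓ zᶜ = ⊥) : y ≤ z := by
  have h1 : yᶜ ⊔ z = ⊤ := by
    have : (y ⊓ zᶜ)ᶜ = (⊥ : α)ᶜ := by rw [h]
    rwa [compl_inf, cc, compl_bot] at this
  calc y = y ⊓ (yᶜ ⊔ z) := by rw [h1, inf_top_eq]
    _ ≤ z := hom z y hzy

/-- commutation -/
def Com (a b : α) : Prop := a = (a ⊓ b) ⊔ (a ⊓ bᶜ)

omit hom in
lemma com_of_le {a b : α} (h : a ≤ b) : Com a b := by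
  unfold Com
  rw [inf_eq_left.2 h, sup_eq_left.2 inf_le_left]

omit hom in
lemma com_compl_right {a b : α} (h : Com a b) : Com a bᶜ := by
  unfold Com at *
  rw [cc, sup_comm]
  exact h

omit hom in
lemma com_of_compl_right {a b : α} (h : Com a bᶜ) : Com a b := by
  have := com_compl_right h
  rwa [cc] at this

lemma com_symm {a b : α} (h : Com a b) : Com b a := by
  unfold Com at *
  set p := a ⊓ b with hp
  set q := a ⊓ bᶜ with hq
  have hqbc : q ≤ bᶜ := inf_le_right
  have h1 : bᶜ ⊔ a = bᶜ ⊔ p := by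
    apply le_antisymm
    · apply sup_le le_sup_left
      rw [h]
      exact sup_le (le_sup_right) (hqbc.trans le_sup_left)
    · exact sup_le le_sup_left (le_sup_of_le_right inf_le_left)
  have h2 : b ⊓ (bᶜ ⊔ a) ≤ p := by
    rw [h1]
    exact hom p b inf_le_right
  -- now show b ≤ (b ⊓ a) ⊔ (b ⊓ aᶜ)
  have hle : (b ⊓ a) ⊔ (b ⊓ aᶜ) ≤ b := sup_le inf_le_left inf_le_left
  have hbot : b ⊓ ((b ⊓ a) ⊔ (b ⊓ aᶜ))ᶜ = ⊥ := by
    rw [compl_sup, compl_inf, compl_inf, cc]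
    have step1 : b ⊓ ((bᶜ ⊔ aᶜ) ⊓ (bᶜ ⊔ a)) ≤ p ⊓ pᶜ := by
      apply le_inf
      · calc b ⊓ ((bᶜ ⊔ aᶜ) ⊓ (bᶜ ⊔ a)) ≤ b ⊓ (bᶜ ⊔ a) := by
              exact inf_le_inf_left _ inf_le_right
          _ ≤ p := h2
      · calc b ⊓ ((bᶜ ⊔ aᶜ) ⊓ (bᶜ ⊔ a)) ≤ bᶜ ⊔ aᶜ := le_trans inf_le_right inf_le_left
          _ = pᶜ := by rw [hp, compl_inf, sup_comm]
    have : b ⊓ ((bᶜ ⊔ aᶜ) ⊓ (bᶜ ⊔ a)) ≤ ⊥ := by rw [← ics p]; exact step1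
    exact le_antisymm this bot_le
  exact le_antisymm (om_le hom hle hbot) hle

lemma com_inf_eq {a b : α} (h : Com a b) : a ⊓ (aᶜ ⊔ b) = a ⊓ b := by
  have hb : Com b a := com_symm hom h
  have h1 : aᶜ ⊔ b = aᶜ ⊔ (a ⊓ b) := by
    apply le_antisymm
    · apply sup_le le_sup_left
      nth_rewrite 1 [hb]
      apply sup_le
      · rw [inf_comm]; exact le_sup_right
      · exact le_sup_of_le_left inf_le_right
    · exact sup_le le_sup_left (le_sup_of_le_right inf_le_right)
  rw [h1]
  apply le_antisymm
  · have := hom (a ⊓ b) a inf_le_left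
    exact this
  · exact le_inf inf_le_left le_sup_right

lemma foulis_holland {a b c : α} (hab : Com a b) (hac : Com a c) :
    a ⊓ (b ⊔ c) = (a ⊓ b) ⊔ (a ⊓ c) := by
  have hle : (a ⊓ b) ⊔ (a ⊓ c) ≤ a ⊓ (b ⊔ c) :=
    sup_le (inf_le_inf_left _ le_sup_left) (inf_le_inf_left _ le_sup_right)
  have hbot : (a ⊓ (b ⊔ c)) ⊓ ((a ⊓ b) ⊔ (a ⊓ c))ᶜ = ⊥ := by
    rw [compl_sup, compl_inf, compl_inf]
    have e1 : a ⊓ (aᶜ ⊔ bᶜ) = a ⊓ bᶜ := com_inf_eq hom (com_compl_right hab)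
    have e2 : a ⊓ (aᶜ ⊔ cᶜ) = a ⊓ cᶜ := com_inf_eq hom (com_compl_right hac)
    have key : (a ⊓ (b ⊔ c)) ⊓ ((aᶜ ⊔ bᶜ) ⊓ (aᶜ ⊔ cᶜ)) ≤ (b ⊔ c) ⊓ (b ⊔ c)ᶜ := by
      apply le_inf
      · exact le_trans inf_le_left inf_le_right
      · rw [compl_sup]
        apply le_inf
        · calc (a ⊓ (b ⊔ c)) ⊓ ((aᶜ ⊔ bᶜ) ⊓ (aᶜ ⊔ cᶜ)) ≤ a ⊓ (aᶜ ⊔ bᶜ) :=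
                le_inf (le_trans inf_le_left inf_le_left) (le_trans inf_le_right inf_le_left)
            _ = a ⊓ bᶜ := e1
            _ ≤ bᶜ := inf_le_right
        · calc (a ⊓ (b ⊔ c)) ⊓ ((aᶜ ⊔ bᶜ) ⊓ (aᶜ ⊔ cᶜ)) ≤ a ⊓ (aᶜ ⊔ cᶜ) :=
                le_inf (le_trans inf_le_left inf_le_left) (le_trans inf_le_right inf_le_right)
            _ = a ⊓ cᶜ := e2
            _ ≤ cᶜ := inf_le_right
    rw [ics] at key
    exact le_antisymm key bot_le
  exact le_antisymm (om_le hom hle hbot) hle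

omit hom in
lemma com_sup_first {a b c : α} (hba : Com b a) (hca : Com c a) : Com (b ⊔ c) a := by
  unfold Com
  apply le_antisymm
  · nth_rewrite 1 [hba, hca]
    apply sup_le <;> apply sup_le
    · exact le_sup_of_le_left (inf_le_inf_right _ le_sup_left)
    · exact le_sup_of_le_right (inf_le_inf_right _ le_sup_left)
    · exact le_sup_of_le_left (inf_le_inf_right _ le_sup_right)
    · exact le_sup_of_le_right (inf_le_inf_right _ le_sup_right)
  · exact sup_le inf_le_left inf_le_left

lemma com_sup_right {a b c : α} (hab : Com a b) (hac : Com a c) : Com a (b ⊔ c) :=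
  com_symm hom (com_sup_first (com_symm hom hab) (com_symm hom hac))

lemma com_compl_left {a b : α} (h : Com a b) : Com aᶜ b :=
  com_symm hom (com_compl_right (com_symm hom h))

lemma com_inf_right {a b c : α} (hab : Com a b) (hac : Com a c) : Com a (b ⊓ c) := by
  apply com_of_compl_right
  rw [compl_inf]
  exact com_sup_right hom (com_compl_right hab) (com_compl_right hac)

lemma com_inf_first {a b c : α} (hba : Com b a) (hca : Com c a) : Com (b ⊓ c) a :=
  com_symm hom (com_inf_right hom (com_symm hom hba) (com_symm hom hca))

lemma foulis_holland_dual {a b c : α} (hab : Com a b) (hac : Com a c) :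
    a ⊔ (b ⊓ c) = (a ⊔ b) ⊓ (a ⊔ c) := by
  apply compl_inj
  rw [compl_sup, compl_inf, compl_inf, compl_sup, compl_sup]
  exact foulis_holland hom (com_compl_right (com_compl_left hom hab))
    (com_compl_right (com_compl_left hom hac))

end OM

end OLTools

/-- The Sasaki hook `a → b := a' ⊔ (a ⊓ b)`. -/
def sasaki {α : Type*} [Ortholattice α] (a b : α) : α := aᶜ ⊔ (a ⊓ b)

/-- The quantum equivalence `a ≡ b := (a ⊓ b) ⊔ (a' ⊓ b')`. -/
def oequiv {α : Type*} [Ortholattice α] (a b : α) : α := (a ⊓ b) ⊔ (aᶜ ⊓ bᶜ)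

namespace OLTools

variable {α : Type*} [Ortholattice α]

lemma oequiv_comm (a b : α) : oequiv a b = oequiv b a := by
  unfold oequiv; rw [inf_comm, inf_comm (aᶜ)]

lemma oequiv_self (a : α) : oequiv a a = ⊤ := by
  unfold oequiv; rw [inf_idem, inf_idem, scs]

lemma oequiv_le_sasaki (a b : α) : oequiv a b ≤ sasaki a b :=
  sup_le le_sup_right (le_sup_of_le_left inf_le_left)

lemma inf_le_sasaki (a b : α) : a ⊓ b ≤ sasaki a b := le_sup_right

lemma sasaki_mono_right (a : α) {b c : α} (h : b ≤ c) : sasaki a b ≤ sasaki a c :=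
  sup_le_sup_left (inf_le_inf_left _ h) _

lemma sasaki_top_left (b : α) : sasaki ⊤ b = b := by
  unfold sasaki; rw [compl_top, top_inf_eq, bot_sup_eq]

lemma sasaki_top_right (a : α) : sasaki a ⊤ = ⊤ := by
  unfold sasaki; rw [inf_top_eq, scs']

lemma sasaki_of_le {a b : α} (h : a ≤ b) : sasaki a b = ⊤ := by
  unfold sasaki; rw [inf_eq_left.2 h, scs']

lemma sasaki_bot_left (b : α) : sasaki ⊥ b = ⊤ := by
  unfold sasaki; rw [compl_bot, top_sup_eq]

lemma sasaki_bot_right (a : α) : sasaki a ⊥ = aᶜ := by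
  unfold sasaki; rw [inf_bot_eq, sup_bot_eq]

section OM
variable (hom : OMLaw α)
include hom

lemma com_oequiv_left (a b : α) : Com a (oequiv a b) := by
  apply com_sup_right hom
  · exact com_symm hom (com_of_le inf_le_left)
  · exact com_symm hom (com_of_compl_right (com_of_le inf_le_left))

lemma com_oequiv_right (a b : α) : Com b (oequiv a b) := by
  rw [oequiv_comm]; exact com_oequiv_left hom b a

lemma oequiv_inf_left_le (a b : α) : oequiv a b ⊓ a ≤ b := by
  rw [inf_comm]
  have h1 : Com a (a ⊓ b) := com_symm hom (com_of_le inf_le_left)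
  have h2 : Com a (aᶜ ⊓ bᶜ) := com_symm hom (com_of_compl_right (com_of_le inf_le_left))
  rw [oequiv, foulis_holland hom h1 h2]
  apply sup_le
  · exact le_trans inf_le_right inf_le_right
  · calc a ⊓ (aᶜ ⊓ bᶜ) ≤ a ⊓ aᶜ := inf_le_inf_left _ inf_le_left
      _ = ⊥ := ics a
      _ ≤ b := bot_le

lemma oequiv_inf_compl_le (a b : α) : oequiv a b ⊓ aᶜ ≤ bᶜ := by
  rw [inf_comm]
  have h1 : Com aᶜ (a ⊓ b) := by
    apply com_symm hom; apply com_compl_right; exact com_of_le inf_le_left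
  have h2 : Com aᶜ (aᶜ ⊓ bᶜ) := com_symm hom (com_of_le inf_le_left)
  rw [oequiv, foulis_holland hom h1 h2]
  apply sup_le
  · calc aᶜ ⊓ (a ⊓ b) ≤ aᶜ ⊓ a := inf_le_inf_left _ inf_le_left
      _ = ⊥ := ics' a
      _ ≤ bᶜ := bot_le
  · exact le_trans inf_le_right inf_le_right

omit hom in
lemma com_split {w t : α} (h : Com w t) : w = (w ⊓ t) ⊔ (w ⊓ tᶜ) := h

/-- transitivity of oequiv -/
lemma oequiv_trans {w a b c : α} (h1 : w ≤ oequiv a b) (h2 : w ≤ oequiv b c) :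
    w ≤ oequiv a c := by
  have hw : w ≤ (oequiv a b) ⊓ (oequiv b c) := le_inf h1 h2
  have hcom : Com ((oequiv a b) ⊓ (oequiv b c)) b :=
    com_inf_first hom (com_symm hom (com_oequiv_right hom a b))
      (com_symm hom (com_oequiv_left hom b c))
  set v := (oequiv a b) ⊓ (oequiv b c) with hv
  have split := com_split hcom
  have p1 : v ⊓ b ≤ a ⊓ c := by
    apply le_inf
    · calc v ⊓ b ≤ oequiv a b ⊓ b := inf_le_inf_right _ inf_le_left
        _ = oequiv b a ⊓ b := by rw [oequiv_comm]
        _ ≤ a := oequiv_inf_left_le hom b a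
    · calc v ⊓ b ≤ oequiv b c ⊓ b := inf_le_inf_right _ inf_le_right
        _ ≤ c := oequiv_inf_left_le hom b c
  have p2 : v ⊓ bᶜ ≤ aᶜ ⊓ cᶜ := by
    apply le_inf
    · calc v ⊓ bᶜ ≤ oequiv a b ⊓ bᶜ := inf_le_inf_right _ inf_le_left
        _ = oequiv b a ⊓ bᶜ := by rw [oequiv_comm]
        _ ≤ aᶜ := oequiv_inf_compl_le hom b a
    · calc v ⊓ bᶜ ≤ oequiv b c ⊓ bᶜ := inf_le_inf_right _ inf_le_right
        _ ≤ cᶜ := oequiv_inf_compl_le hom b c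
  calc w ≤ v := hw
    _ = (v ⊓ b) ⊔ (v ⊓ bᶜ) := split
    _ ≤ (a ⊓ c) ⊔ (aᶜ ⊓ cᶜ) := sup_le_sup p1 p2
    _ = oequiv a c := rfl

lemma oequiv_inf_right {w a b c : α} (h1 : w ≤ oequiv a b) (h2 : w ≤ oequiv a c) :
    w ≤ oequiv a (b ⊓ c) := by
  have hcom : Com ((oequiv a b) ⊓ (oequiv a c)) a :=
    com_inf_first hom (com_symm hom (com_oequiv_left hom a b))
      (com_symm hom (com_oequiv_left hom a c))
  set v := (oequiv a b) ⊓ (oequiv a c) with hv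
  have p1 : v ⊓ a ≤ a ⊓ (b ⊓ c) := by
    apply le_inf inf_le_right
    apply le_inf
    · calc v ⊓ a ≤ oequiv a b ⊓ a := inf_le_inf_right _ inf_le_left
        _ ≤ b := oequiv_inf_left_le hom a b
    · calc v ⊓ a ≤ oequiv a c ⊓ a := inf_le_inf_right _ inf_le_right
        _ ≤ c := oequiv_inf_left_le hom a c
  have p2 : v ⊓ aᶜ ≤ aᶜ ⊓ (b ⊓ c)ᶜ := by
    apply le_inf inf_le_right
    rw [compl_inf]
    calc v ⊓ aᶜ ≤ oequiv a b ⊓ aᶜ := inf_le_inf_right _ inf_le_left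
      _ ≤ bᶜ := oequiv_inf_compl_le hom a b
      _ ≤ bᶜ ⊔ cᶜ := le_sup_left
  calc w ≤ v := le_inf h1 h2
    _ = (v ⊓ a) ⊔ (v ⊓ aᶜ) := com_split hcom
    _ ≤ (a ⊓ (b ⊓ c)) ⊔ (aᶜ ⊓ (b ⊓ c)ᶜ) := sup_le_sup p1 p2
    _ = oequiv a (b ⊓ c) := rfl

lemma oequiv_sup_right {w a b c : α} (h1 : w ≤ oequiv a b) (h2 : w ≤ oequiv a c) :
    w ≤ oequiv a (b ⊔ c) := by
  have hcom : Com ((oequiv a b) ⊓ (oequiv a c)) a :=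
    com_inf_first hom (com_symm hom (com_oequiv_left hom a b))
      (com_symm hom (com_oequiv_left hom a c))
  set v := (oequiv a b) ⊓ (oequiv a c) with hv
  have p1 : v ⊓ a ≤ a ⊓ (b ⊔ c) := by
    apply le_inf inf_le_right
    calc v ⊓ a ≤ oequiv a b ⊓ a := inf_le_inf_right _ inf_le_left
      _ ≤ b := oequiv_inf_left_le hom a b
      _ ≤ b ⊔ c := le_sup_left
  have p2 : v ⊓ aᶜ ≤ aᶜ ⊓ (b ⊔ c)ᶜ := by
    apply le_inf inf_le_right
    rw [compl_sup]
    apply le_inf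
    · calc v ⊓ aᶜ ≤ oequiv a b ⊓ aᶜ := inf_le_inf_right _ inf_le_left
        _ ≤ bᶜ := oequiv_inf_compl_le hom a b
    · calc v ⊓ aᶜ ≤ oequiv a c ⊓ aᶜ := inf_le_inf_right _ inf_le_right
        _ ≤ cᶜ := oequiv_inf_compl_le hom a c
  calc w ≤ v := le_inf h1 h2
    _ = (v ⊓ a) ⊔ (v ⊓ aᶜ) := com_split hcom
    _ ≤ (a ⊓ (b ⊔ c)) ⊔ (aᶜ ⊓ (b ⊔ c)ᶜ) := sup_le_sup p1 p2
    _ = oequiv a (b ⊔ c) := rfl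

/-- P1 : sasaki a b ⊓ sasaki b a = oequiv a b -/
lemma sasaki_inf_sasaki (a b : α) : sasaki a b ⊓ sasaki b a = oequiv a b := by
  have hca : Com (a ⊓ b) aᶜ := by
    apply com_compl_right; exact com_of_le inf_le_left
  have hcb : Com (a ⊓ b) bᶜ := by
    apply com_compl_right; exact com_of_le inf_le_right
  have : sasaki a b ⊓ sasaki b a = ((a ⊓ b) ⊔ aᶜ) ⊓ ((a ⊓ b) ⊔ bᶜ) := by
    unfold sasaki
    rw [sup_comm (aᶜ), sup_comm (bᶜ), inf_comm b a]
  rw [this, ← foulis_holland_dual hom hca hcb]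
  rfl

/-- V : the key lemma for (iv) → (iii) -/
lemma sasaki_le_sasaki_sup {s x y : α} (hx : x ≤ s) (hy : y ≤ s) :
    sasaki x y ≤ sasaki (sᶜ ⊔ x) (sᶜ ⊔ y) := by
  have hsx : Com sᶜ x := com_compl_left hom (com_symm hom (com_of_le hx))
  have hsy : Com sᶜ y := com_compl_left hom (com_symm hom (com_of_le hy))
  have e1 : (sᶜ ⊔ x) ⊓ (sᶜ ⊔ y) = sᶜ ⊔ (x ⊓ y) := (foulis_holland_dual hom hsx hsy).symm
  have e2 : sᶜ ⊔ (s ⊓ xᶜ) = sᶜ ⊔ xᶜ := by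
    have : Com sᶜ s := com_of_compl_right (com_of_le le_rfl)
    rw [foulis_holland_dual hom this (com_compl_right hsx), scs', top_inf_eq]
  unfold sasaki
  rw [compl_sup, cc]
  calc xᶜ ⊔ (x ⊓ y) ≤ (sᶜ ⊔ xᶜ) ⊔ (sᶜ ⊔ (x ⊓ y)) :=
        sup_le_sup le_sup_right le_sup_right
    _ = (sᶜ ⊔ (s ⊓ xᶜ)) ⊔ (sᶜ ⊔ (x ⊓ y)) := by rw [e2]
    _ = (s ⊓ xᶜ) ⊔ (sᶜ ⊔ (x ⊓ y)) := by
        rw [sup_comm (sᶜ) (s ⊓ xᶜ), sup_assoc, ← sup_assoc (sᶜ), sup_idem]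
    _ = s ⊓ xᶜ ⊔ (sᶜ ⊔ x) ⊓ (sᶜ ⊔ y) := by rw [e1]

end OM

end OLTools

/-- The Godowski identity `a₁ ≡γ aₙ = (a₁→a₂) ⊓ ⋯ ⊓ (aₙ₋₁→aₙ) ⊓ (aₙ→a₁)`. -/
def goFwd {α : Type*} [Ortholattice α] (n : ℕ) (hn : 3 ≤ n) (a : Fin n → α) : α :=
  Finset.univ.inf fun i : Fin n => sasaki (a i) (a (i + ⟨1, by omega⟩))

/-- The Godowski identity `aₙ ≡γ a₁ = (aₙ→aₙ₋₁) ⊓ ⋯ ⊓ (a₂→a₁) ⊓ (a₁→aₙ)`. -/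
def goBwd {α : Type*} [Ortholattice α] (n : ℕ) (hn : 3 ≤ n) (a : Fin n → α) : α :=
  Finset.univ.inf fun i : Fin n => sasaki (a (i + ⟨1, by omega⟩)) (a i)

namespace OLTools

variable {α : Type*} [Ortholattice α]

lemma inf_comp_surj {β : Type*} [SemilatticeInf β] [OrderTop β] {m : ℕ}
    (e : Fin m → Fin m) (he : Function.Surjective e) (f : Fin m → β) :
    Finset.univ.inf (fun i => f (e i)) = Finset.univ.inf f := by
  apply le_antisymm
  · apply Finset.le_inf
    intro i _
    obtain ⟨j, hj⟩ := he i
    have : Finset.univ.inf (fun i => f (e i)) ≤ f (e j) :=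
      Finset.inf_le (Finset.mem_univ j)
    rwa [hj] at this
  · apply Finset.le_inf
    intro i _
    exact Finset.inf_le (Finset.mem_univ (e i))

section FinFacts

variable {n : ℕ} (hn : n ≥ 3)
include hn

lemma fin_add_mk {k : ℕ} (hk : k < n) (hk1 : k + 1 < n) :
    (⟨k, hk⟩ : Fin n) + ⟨1, by omega⟩ = ⟨k + 1, hk1⟩ := by
  apply Fin.ext
  rw [Fin.add_def]
  exact Nat.mod_eq_of_lt hk1

lemma fin_last_add_one :
    (⟨n - 1, by omega⟩ : Fin n) + ⟨1, by omega⟩ = ⟨0, by omega⟩ := by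
  apply Fin.ext
  rw [Fin.add_def]
  show (n - 1 + 1) % n = 0
  have h : n - 1 + 1 = n := by omega
  rw [h, Nat.mod_self]

lemma fin_add_one_right_comm (i k : Fin n) :
    (i + k) + ⟨1, by omega⟩ = (i + ⟨1, by omega⟩) + k := by
  apply Fin.ext
  simp only [Fin.add_def]
  rw [Nat.mod_add_mod, Nat.mod_add_mod]
  congr 1
  omega

lemma fin_add_one_add_last (i : Fin n) :
    (i + ⟨1, by omega⟩) + ⟨n - 1, by omega⟩ = i := by
  apply Fin.ext
  simp only [Fin.add_def]
  rw [Nat.mod_add_mod]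
  have h : i.1 + 1 + (n - 1) = i.1 + n := by omega
  rw [h, Nat.add_mod_right]
  exact Nat.mod_eq_of_lt i.2

lemma fin_rev_succ (i : Fin n) :
    Fin.rev (i + ⟨1, by omega⟩) + ⟨1, by omega⟩ = Fin.rev i := by
  apply Fin.ext
  simp only [Fin.add_def, Fin.val_rev]
  rcases Nat.lt_or_ge (i.1 + 1) n with h | h
  · rw [Nat.mod_eq_of_lt h]
    have h2 : n - (i.1 + 1 + 1) + 1 < n := by omega
    rw [Nat.mod_eq_of_lt h2]
    omega
  · have hi : i.1 = n - 1 := by have := i.2; omega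
    have h1 : (i.1 + 1) % n = 0 := by
      have : i.1 + 1 = n := by omega
      rw [this, Nat.mod_self]
    rw [h1]
    have h2 : n - (0 + 1) + 1 = n := by omega
    rw [h2, Nat.mod_self]
    omega

lemma fin_add_surjective (k : Fin n) : Function.Surjective (fun i : Fin n => i + k) := by
  intro i
  refine ⟨⟨(i.1 + (n - k.1)) % n, Nat.mod_lt _ (by omega)⟩, ?_⟩
  apply Fin.ext
  simp only [Fin.add_def]
  rw [Nat.mod_add_mod]
  have h : i.1 + (n - k.1) + k.1 = i.1 + n := by have := k.2; omega
  rw [h, Nat.add_mod_right]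
  exact Nat.mod_eq_of_lt i.2

end FinFacts

section GoFacts

variable {n : ℕ} (hn : n ≥ 3)

lemma goFwd_le_term (a : Fin n → α) (i : Fin n) :
    goFwd n hn a ≤ sasaki (a i) (a (i + ⟨1, by omega⟩)) :=
  Finset.inf_le (Finset.mem_univ i)

lemma goBwd_le_term (a : Fin n → α) (i : Fin n) :
    goBwd n hn a ≤ sasaki (a (i + ⟨1, by omega⟩)) (a i) :=
  Finset.inf_le (Finset.mem_univ i)

lemma le_goFwd {w : α} (a : Fin n → α)
    (h : ∀ i : Fin n, w ≤ sasaki (a i) (a (i + ⟨1, by omega⟩))) :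
    w ≤ goFwd n hn a :=
  Finset.le_inf fun i _ => h i

lemma le_goBwd {w : α} (a : Fin n → α)
    (h : ∀ i : Fin n, w ≤ sasaki (a (i + ⟨1, by omega⟩)) (a i)) :
    w ≤ goBwd n hn a :=
  Finset.le_inf fun i _ => h i

lemma goFwd_rot (a : Fin n → α) (k : Fin n) :
    goFwd n hn (fun i => a (i + k)) = goFwd n hn a := by
  unfold goFwd
  refine Eq.trans (Finset.inf_congr rfl ?_)
    (inf_comp_surj (fun i : Fin n => i + k) (fin_add_surjective hn k)
      (fun i : Fin n => sasaki (a i) (a (i + ⟨1, by omega⟩))))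
  intro i _
  show sasaki (a (i + k)) (a ((i + ⟨1, by omega⟩) + k)) =
    sasaki (a (i + k)) (a ((i + k) + ⟨1, by omega⟩))
  rw [fin_add_one_right_comm hn]

lemma goFwd_rev (a : Fin n → α) :
    goFwd n hn (fun i => a (Fin.rev i)) = goBwd n hn a := by
  unfold goFwd goBwd
  have hsurj : Function.Surjective (fun i : Fin n => Fin.rev (i + ⟨1, by omega⟩)) := by
    apply Function.Surjective.comp (g := Fin.rev)
    · exact Fin.rev_surjective
    · exact fin_add_surjective hn _
  refine Eq.trans (Finset.inf_congr rfl ?_)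
    (inf_comp_surj (fun i : Fin n => Fin.rev (i + ⟨1, by omega⟩)) hsurj
      (fun j : Fin n => sasaki (a (j + ⟨1, by omega⟩)) (a j)))
  intro i _
  show sasaki (a (Fin.rev i)) (a (Fin.rev (i + ⟨1, by omega⟩))) =
    sasaki (a (Fin.rev (i + ⟨1, by omega⟩) + ⟨1, by omega⟩)) (a (Fin.rev (i + ⟨1, by omega⟩)))
  rw [fin_rev_succ hn]

end GoFacts

end OLTools

namespace OLTools

variable {α : Type*} [Ortholattice α]

section Chain

variable {n : ℕ} (hn : n ≥ 3)
include hn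

lemma chain_oequiv (hom : OMLaw α) (a : Fin n → α) {w : α}
    (h : ∀ k : ℕ, ∀ hk : k + 1 < n, w ≤ oequiv (a ⟨k, by omega⟩) (a ⟨k + 1, hk⟩)) :
    ∀ k : ℕ, ∀ hk : k < n, w ≤ oequiv (a ⟨0, by omega⟩) (a ⟨k, hk⟩) := by
  intro k
  induction k with
  | zero =>
    intro hk
    rw [oequiv_self]
    exact le_top
  | succ m ih =>
    intro hk
    exact oequiv_trans hom (ih (by omega)) (h m hk)

end Chain

lemma oequiv_finset_inf (hom : OMLaw α) {ι : Type*} (x w : α) (f : ι → α) :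
    ∀ (s : Finset ι) (hs : s.Nonempty), (∀ j ∈ s, w ≤ oequiv x (f j)) →
      w ≤ oequiv x (s.inf' hs f) := by
  intro s hs
  induction hs using Finset.Nonempty.cons_induction with
  | singleton a =>
    intro h
    rw [Finset.inf'_singleton]
    exact h a (Finset.mem_singleton_self a)
  | cons a t ha ht ih =>
    intro h
    rw [Finset.inf'_cons (H := ht)]
    exact oequiv_inf_right hom (h a (Finset.mem_cons_self a t))
      (ih fun j hj => h j (Finset.mem_cons_of_mem hj))

lemma oequiv_finset_sup (hom : OMLaw α) {ι : Type*} (x w : α) (f : ι → α) :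
    ∀ (s : Finset ι) (hs : s.Nonempty), (∀ j ∈ s, w ≤ oequiv x (f j)) →
      w ≤ oequiv x (s.sup' hs f) := by
  intro s hs
  induction hs using Finset.Nonempty.cons_induction with
  | singleton a =>
    intro h
    rw [Finset.sup'_singleton]
    exact h a (Finset.mem_singleton_self a)
  | cons a t ha ht ih =>
    intro h
    rw [Finset.sup'_cons (H := ht)]
    exact oequiv_sup_right hom (h a (Finset.mem_cons_self a t))
      (ih fun j hj => h j (Finset.mem_cons_of_mem hj))

section Main

variable {n : ℕ} (hn : n ≥ 3)
include hn


lemma val_add_one_of_lt {i : Fin n} (h : i.1 + 1 < n) : (i + ⟨1, by omega⟩ : Fin n).1 = i.1 + 1 := by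
  rw [Fin.add_def]
  exact Nat.mod_eq_of_lt h

lemma val_add_one_last {i : Fin n} (h : i.1 = n - 1) : (i + ⟨1, by omega⟩ : Fin n).1 = 0 := by
  rw [Fin.add_def]
  show (i.1 + 1) % n = 0
  rw [h]
  have h2 : n - 1 + 1 = n := by omega
  rw [h2, Nat.mod_self]

lemma i_to_iii (hI : ∀ a : Fin n → α, goFwd n hn a = goBwd n hn a) :
    ∀ a : Fin n → α, goFwd n hn a ≤ sasaki (a ⟨0, by omega⟩) (a ⟨n - 1, by omega⟩) := by
  intro a
  rw [hI a]
  have h := goBwd_le_term hn a ⟨n - 1, by omega⟩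
  rwa [fin_last_add_one hn] at h

lemma iii_to_backhooks
    (hIII : ∀ a : Fin n → α, goFwd n hn a ≤ sasaki (a ⟨0, by omega⟩) (a ⟨n - 1, by omega⟩))
    (a : Fin n → α) (i : Fin n) :
    goFwd n hn a ≤ sasaki (a (i + ⟨1, by omega⟩)) (a i) := by
  have h1 := hIII (fun j => a (j + (i + ⟨1, by omega⟩)))
  rw [goFwd_rot hn] at h1
  have e0 : (⟨0, by omega⟩ : Fin n) + (i + ⟨1, by omega⟩) = i + ⟨1, by omega⟩ := by
    apply Fin.ext
    rw [Fin.add_def]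
    show (0 + _) % n = _
    rw [Nat.zero_add]
    exact Nat.mod_eq_of_lt (i + ⟨1, by omega⟩).2
  have e1 : (⟨n - 1, by omega⟩ : Fin n) + (i + ⟨1, by omega⟩) = i := by
    have hc : (⟨n - 1, by omega⟩ : Fin n) + (i + ⟨1, by omega⟩)
        = (i + ⟨1, by omega⟩) + ⟨n - 1, by omega⟩ := by
      apply Fin.ext
      simp only [Fin.add_def]
      congr 1
      omega
    rw [hc, fin_add_one_add_last hn]
  rw [e0, e1] at h1
  exact h1

lemma iii_to_i
    (hIII : ∀ a : Fin n → α, goFwd n hn a ≤ sasaki (a ⟨0, by omega⟩) (a ⟨n - 1, by omega⟩)) :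
    ∀ a : Fin n → α, goFwd n hn a = goBwd n hn a := by
  intro a
  apply le_antisymm
  · exact le_goBwd hn a fun i => iii_to_backhooks hn hIII a i
  · have h1 : goBwd n hn a = goFwd n hn (fun i => a (Fin.rev i)) := (goFwd_rev hn a).symm
    have h2 : goFwd n hn (fun i => a (Fin.rev i)) ≤ goBwd n hn (fun i => a (Fin.rev i)) :=
      le_goBwd hn _ fun i => iii_to_backhooks hn hIII _ i
    have h3 : goBwd n hn (fun i => a (Fin.rev i))
        = goFwd n hn (fun i => a (Fin.rev (Fin.rev i))) := (goFwd_rev hn _).symm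
    have h4 : (fun i : Fin n => a (Fin.rev (Fin.rev i))) = a := by
      funext i
      rw [Fin.rev_rev]
    rw [h1]
    calc goFwd n hn (fun i => a (Fin.rev i)) ≤ goBwd n hn (fun i => a (Fin.rev i)) := h2
      _ = goFwd n hn (fun i => a (Fin.rev (Fin.rev i))) := h3
      _ = goFwd n hn a := by rw [h4]

lemma hom_of_iii
    (hIII : ∀ a : Fin n → α, goFwd n hn a ≤ sasaki (a ⟨0, by omega⟩) (a ⟨n - 1, by omega⟩)) :
    OMLaw α := by
  have key : ∀ x y : α, x ≤ y → (yᶜ ⊔ x) ⊓ xᶜ ≤ yᶜ := by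
    intro x y hxy
    set c : Fin n → α := fun i => if i.1 = 0 then y else if i.1 = 1 then x else ⊥ with hc
    have h1 := hIII c
    have hc0 : c ⟨0, by omega⟩ = y := by simp [hc]
    have hcl : c ⟨n - 1, by omega⟩ = ⊥ := by
      show (if (n-1 : ℕ) = 0 then y else if (n-1 : ℕ) = 1 then x else ⊥) = ⊥
      rw [if_neg (by omega), if_neg (by omega)]
    rw [hc0, hcl, sasaki_bot_right] at h1
    refine le_trans ?_ h1
    apply le_goFwd hn
    intro i
    rcases Nat.lt_or_ge i.1 2 with h2 | h2
    · rcases Nat.lt_or_ge i.1 1 with h3 | h3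
      · have e1 : c i = y := by
          show (if i.1 = 0 then y else if i.1 = 1 then x else ⊥) = y
          rw [if_pos (by omega)]
        have hv : (i + ⟨1, by omega⟩ : Fin n).1 = i.1 + 1 := val_add_one_of_lt hn (by omega)
        have e2 : c (i + ⟨1, by omega⟩) = x := by
          show (if (i + ⟨1, by omega⟩ : Fin n).1 = 0 then y
            else if (i + ⟨1, by omega⟩ : Fin n).1 = 1 then x else ⊥) = x
          rw [if_neg (by omega), if_pos (by omega)]
        rw [e1, e2]
        unfold sasaki
        rw [inf_eq_right.2 hxy]
        exact inf_le_left
      · have e1 : c i = x := by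
          show (if i.1 = 0 then y else if i.1 = 1 then x else ⊥) = x
          rw [if_neg (by omega), if_pos (by omega)]
        have hv : (i + ⟨1, by omega⟩ : Fin n).1 = i.1 + 1 := val_add_one_of_lt hn (by omega)
        have e2 : c (i + ⟨1, by omega⟩) = ⊥ := by
          show (if (i + ⟨1, by omega⟩ : Fin n).1 = 0 then y
            else if (i + ⟨1, by omega⟩ : Fin n).1 = 1 then x else ⊥) = ⊥
          rw [if_neg (by omega), if_neg (by omega)]
        rw [e1, e2, sasaki_bot_right]
        exact inf_le_right
    · have e1 : c i = ⊥ := by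
        show (if i.1 = 0 then y else if i.1 = 1 then x else ⊥) = ⊥
        rw [if_neg (by omega), if_neg (by omega)]
      rw [e1, sasaki_bot_left]
      exact le_top
  intro p q hpq
  have h := key qᶜ pᶜ (compl_anti hpq)
  simp only [cc] at h
  rw [inf_comm q, sup_comm qᶜ p]
  exact h

lemma hom_of_iv (hIV : ∀ a : Fin n → α, goFwd n hn a ⊓ Finset.univ.sup a = Finset.univ.inf a) :
    OMLaw α := by
  intro x y hxy
  set c : Fin n → α := fun i => if i.1 = 0 then x else y with hc
  have hc0 : c ⟨0, by omega⟩ = x := by simp [hc]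
  have hc1 : c ⟨1, by omega⟩ = y := by
    show (if (1 : ℕ) = 0 then x else y) = y
    rw [if_neg (by omega)]
  have h1 : (yᶜ ⊔ x) ⊓ y ≤ goFwd n hn c ⊓ Finset.univ.sup c := by
    apply le_inf
    · refine le_trans inf_le_left (le_goFwd hn c ?_)
      intro i
      rcases Nat.lt_or_ge i.1 (n - 1) with h2 | h2
      · have hv : (i + ⟨1, by omega⟩ : Fin n).1 = i.1 + 1 := val_add_one_of_lt hn (by omega)
        have e2 : c (i + ⟨1, by omega⟩) = y := by
          show (if (i + ⟨1, by omega⟩ : Fin n).1 = 0 then x else y) = y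
          rw [if_neg (by omega)]
        rcases Nat.lt_or_ge i.1 1 with h3 | h3
        · have e1 : c i = x := by
            show (if i.1 = 0 then x else y) = x
            rw [if_pos (by omega)]
          rw [e1, e2, sasaki_of_le hxy]
          exact le_top
        · have e1 : c i = y := by
            show (if i.1 = 0 then x else y) = y
            rw [if_neg (by omega)]
          rw [e1, e2, sasaki_of_le le_rfl]
          exact le_top
      · have hv : (i + ⟨1, by omega⟩ : Fin n).1 = 0 := val_add_one_last hn (by have := i.2; omega)
        have e1 : c i = y := by
          show (if i.1 = 0 then x else y) = y
          rw [if_neg (by omega)]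
        have e2 : c (i + ⟨1, by omega⟩) = x := by
          show (if (i + ⟨1, by omega⟩ : Fin n).1 = 0 then x else y) = x
          rw [if_pos (by omega)]
        rw [e1, e2]
        unfold sasaki
        rw [inf_eq_right.2 hxy]
    · refine le_trans inf_le_right ?_
      rw [← hc1]
      exact Finset.le_sup (Finset.mem_univ _)
  rw [hIV c] at h1
  have h2 : Finset.univ.inf c ≤ x := by
    rw [← hc0]
    exact Finset.inf_le (Finset.mem_univ _)
  calc y ⊓ (yᶜ ⊔ x) = (yᶜ ⊔ x) ⊓ y := by rw [inf_comm]
    _ ≤ Finset.univ.inf c := h1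
    _ ≤ x := h2

end Main

end OLTools

namespace OLTools

variable {α : Type*} [Ortholattice α]

section Main2

variable {n : ℕ} (hn : n ≥ 3)
include hn

omit hn in
lemma le_sasaki_congr {w : α} (a : Fin n → α) {i j i' j' : Fin n} (hi : i = i') (hj : j = j')
    (h : w ≤ sasaki (a i) (a j)) : w ≤ sasaki (a i') (a j') := by
  subst hi; subst hj; exact h

omit hn in
lemma le_oequiv_congr {w : α} (a : Fin n → α) {i j i' j' : Fin n} (hi : i = i') (hj : j = j')
    (h : w ≤ oequiv (a i) (a j)) : w ≤ oequiv (a i') (a j') := by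
  subst hi; subst hj; exact h

lemma i_to_ii (hI : ∀ a : Fin n → α, goFwd n hn a = goBwd n hn a) :
    ∀ a : Fin n → α, goFwd n hn a =
      Finset.univ.inf fun i : Fin (n - 1) =>
        oequiv (a ⟨i.1, by have := i.2; omega⟩) (a ⟨i.1 + 1, by have := i.2; omega⟩) := by
  have hIII := i_to_iii hn hI
  have hom := hom_of_iii hn hIII
  intro a
  apply le_antisymm
  · apply Finset.le_inf
    intro i _
    rw [← sasaki_inf_sasaki hom]
    apply le_inf
    · refine le_sasaki_congr a rfl ?_ (goFwd_le_term hn a ⟨i.1, by have := i.2; omega⟩)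
      exact Fin.ext (val_add_one_of_lt hn (by show i.1 + 1 < n; have := i.2; omega))
    · rw [hI a]
      refine le_sasaki_congr a ?_ rfl (goBwd_le_term hn a ⟨i.1, by have := i.2; omega⟩)
      exact Fin.ext (val_add_one_of_lt hn (by show i.1 + 1 < n; have := i.2; omega))
  · apply le_goFwd hn
    intro j
    rcases Nat.lt_or_ge j.1 (n - 1) with hj | hj
    · have hterm := Finset.inf_le (f := fun i : Fin (n - 1) =>
        oequiv (a ⟨i.1, by have := i.2; omega⟩) (a ⟨i.1 + 1, by have := i.2; omega⟩))
        (Finset.mem_univ (⟨j.1, hj⟩ : Fin (n - 1)))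
      refine le_sasaki_congr a (i := ⟨j.1, by omega⟩) (j := ⟨j.1 + 1, by omega⟩) ?_ ?_
        (le_trans hterm (oequiv_le_sasaki _ _))
      · exact Fin.ext rfl
      · exact (Fin.ext (val_add_one_of_lt hn (by omega))).symm
    · have hchain : Finset.univ.inf (fun i : Fin (n - 1) =>
          oequiv (a ⟨i.1, by have := i.2; omega⟩) (a ⟨i.1 + 1, by have := i.2; omega⟩)) ≤
          oequiv (a ⟨0, by omega⟩) (a ⟨n - 1, by omega⟩) := by
        refine chain_oequiv hn hom a ?_ (n - 1) (by omega)
        intro k hk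
        exact Finset.inf_le (Finset.mem_univ (⟨k, by omega⟩ : Fin (n - 1)))
      rw [oequiv_comm] at hchain
      refine le_sasaki_congr a (i := ⟨n - 1, by omega⟩) (j := ⟨0, by omega⟩) ?_ ?_
        (le_trans hchain (oequiv_le_sasaki _ _))
      · exact Fin.ext (by show n - 1 = j.1; have := j.2; omega)
      · exact (Fin.ext (val_add_one_last hn (by show j.1 = n - 1; have := j.2; omega))).symm

lemma ii_to_i (hII : ∀ a : Fin n → α, goFwd n hn a =
      Finset.univ.inf fun i : Fin (n - 1) =>
        oequiv (a ⟨i.1, by have := i.2; omega⟩) (a ⟨i.1 + 1, by have := i.2; omega⟩)) :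
    ∀ a : Fin n → α, goFwd n hn a = goBwd n hn a := by
  intro a
  have h1 : goBwd n hn a = goFwd n hn (fun i => a (Fin.rev i)) := (goFwd_rev hn a).symm
  rw [h1, hII a, hII (fun i => a (Fin.rev i))]
  symm
  refine Eq.trans (Finset.inf_congr rfl ?_)
    (inf_comp_surj (fun i : Fin (n - 1) => ⟨n - 2 - i.1, by omega⟩) ?_
      (fun i : Fin (n - 1) =>
        oequiv (a ⟨i.1, by have := i.2; omega⟩) (a ⟨i.1 + 1, by have := i.2; omega⟩)))
  · intro i _
    show oequiv (a (Fin.rev ⟨i.1, by have := i.2; omega⟩))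
        (a (Fin.rev ⟨i.1 + 1, by have := i.2; omega⟩)) =
      oequiv (a ⟨n - 2 - i.1, by have := i.2; omega⟩) (a ⟨n - 2 - i.1 + 1, by have := i.2; omega⟩)
    rw [oequiv_comm]
    have e1 : Fin.rev (⟨i.1 + 1, by have := i.2; omega⟩ : Fin n) =
        ⟨n - 2 - i.1, by have := i.2; omega⟩ := by
      apply Fin.ext
      rw [Fin.val_rev]
      show n - (i.1 + 1 + 1) = n - 2 - i.1
      omega
    have e2 : Fin.rev (⟨i.1, by have := i.2; omega⟩ : Fin n) =
        ⟨n - 2 - i.1 + 1, by have := i.2; omega⟩ := by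
      apply Fin.ext
      rw [Fin.val_rev]
      show n - (i.1 + 1) = n - 2 - i.1 + 1
      have := i.2
      omega
    rw [e1, e2]
  · intro i
    exact ⟨⟨n - 2 - i.1, by omega⟩, Fin.ext (by show n - 2 - (n - 2 - i.1) = i.1; have := i.2; omega)⟩

lemma iii_to_iv
    (hIII : ∀ a : Fin n → α, goFwd n hn a ≤ sasaki (a ⟨0, by omega⟩) (a ⟨n - 1, by omega⟩)) :
    ∀ a : Fin n → α, goFwd n hn a ⊓ Finset.univ.sup a = Finset.univ.inf a := by
  have hom := hom_of_iii hn hIII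
  intro a
  have hadj : ∀ i : Fin n, goFwd n hn a ≤ oequiv (a i) (a (i + ⟨1, by omega⟩)) := by
    intro i
    rw [← sasaki_inf_sasaki hom]
    exact le_inf (goFwd_le_term hn a i) (iii_to_backhooks hn hIII a i)
  have hchain : ∀ k : ℕ, ∀ hk : k + 1 < n,
      goFwd n hn a ≤ oequiv (a ⟨k, by omega⟩) (a ⟨k + 1, hk⟩) := by
    intro k hk
    refine le_oequiv_congr a rfl ?_ (hadj ⟨k, by omega⟩)
    exact Fin.ext (val_add_one_of_lt hn hk)
  have h0j : ∀ j : Fin n, goFwd n hn a ≤ oequiv (a ⟨0, by omega⟩) (a j) := by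
    intro j
    have h := chain_oequiv hn hom a hchain j.1 j.2
    exact le_oequiv_congr a rfl (Fin.ext rfl) h
  have hne : (Finset.univ : Finset (Fin n)).Nonempty := ⟨⟨0, by omega⟩, Finset.mem_univ _⟩
  have hm : goFwd n hn a ≤ oequiv (a ⟨0, by omega⟩) (Finset.univ.inf a) := by
    have h := oequiv_finset_inf hom (a ⟨0, by omega⟩) (goFwd n hn a) a Finset.univ hne
      (fun j _ => h0j j)
    rwa [Finset.inf'_eq_inf] at h
  have hs : goFwd n hn a ≤ oequiv (a ⟨0, by omega⟩) (Finset.univ.sup a) := by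
    have h := oequiv_finset_sup hom (a ⟨0, by omega⟩) (goFwd n hn a) a Finset.univ hne
      (fun j _ => h0j j)
    rwa [Finset.sup'_eq_sup] at h
  have hsm : goFwd n hn a ≤ oequiv (Finset.univ.sup a) (Finset.univ.inf a) := by
    rw [oequiv_comm] at hs
    exact oequiv_trans hom hs hm
  apply le_antisymm
  · exact le_trans (inf_le_inf_right _ hsm) (oequiv_inf_left_le hom _ _)
  · apply le_inf
    · apply le_goFwd hn
      intro i
      exact le_trans (le_inf (Finset.inf_le (Finset.mem_univ i))
        (Finset.inf_le (Finset.mem_univ (i + ⟨1, by omega⟩)))) (inf_le_sasaki _ _)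
    · exact le_trans (Finset.inf_le (Finset.mem_univ ⟨0, by omega⟩))
        (Finset.le_sup (Finset.mem_univ _))

lemma iv_to_iii
    (hIV : ∀ a : Fin n → α, goFwd n hn a ⊓ Finset.univ.sup a = Finset.univ.inf a) :
    ∀ a : Fin n → α, goFwd n hn a ≤ sasaki (a ⟨0, by omega⟩) (a ⟨n - 1, by omega⟩) := by
  have hom := hom_of_iv hn hIV
  intro a
  set s : α := Finset.univ.sup a with hsdef
  have has : ∀ i, a i ≤ s := fun i => Finset.le_sup (Finset.mem_univ i)
  set b : Fin n → α := fun i => sᶜ ⊔ a i with hb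
  have h1 : goFwd n hn a ≤ goFwd n hn b := by
    apply le_goFwd hn
    intro i
    calc goFwd n hn a ≤ sasaki (a i) (a (i + ⟨1, by omega⟩)) := goFwd_le_term hn a i
      _ ≤ sasaki (sᶜ ⊔ a i) (sᶜ ⊔ a (i + ⟨1, by omega⟩)) :=
          sasaki_le_sasaki_sup hom (has i) (has _)
  have hsupb : Finset.univ.sup b = ⊤ := by
    apply le_antisymm le_top
    have h2 : s ≤ Finset.univ.sup b := by
      apply Finset.sup_mono_fun
      intro i _
      exact le_sup_right
    have h3 : sᶜ ≤ Finset.univ.sup b := by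
      have hb0 : sᶜ ≤ b ⟨0, by omega⟩ := le_sup_left
      exact le_trans hb0 (Finset.le_sup (Finset.mem_univ _))
    calc (⊤ : α) = s ⊔ sᶜ := (scs s).symm
      _ ≤ Finset.univ.sup b := sup_le h2 h3
  have h4 := hIV b
  rw [hsupb, inf_top_eq] at h4
  have hcom : ∀ i, Com sᶜ (a i) := fun i =>
    com_compl_left hom (com_symm hom (com_of_le (has i)))
  have h5 : Finset.univ.inf b ≤ sᶜ ⊔ (a ⟨0, by omega⟩ ⊓ a ⟨n - 1, by omega⟩) := by
    rw [foulis_holland_dual hom (hcom ⟨0, by omega⟩) (hcom ⟨n - 1, by omega⟩)]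
    exact le_inf (Finset.inf_le (Finset.mem_univ _)) (Finset.inf_le (Finset.mem_univ _))
  have h6 : sᶜ ⊔ (a ⟨0, by omega⟩ ⊓ a ⟨n - 1, by omega⟩) ≤
      sasaki (a ⟨0, by omega⟩) (a ⟨n - 1, by omega⟩) :=
    sup_le_sup (compl_anti (has _)) le_rfl
  calc goFwd n hn a ≤ goFwd n hn b := h1
    _ = Finset.univ.inf b := h4
    _ ≤ sᶜ ⊔ (a ⟨0, by omega⟩ ⊓ a ⟨n - 1, by omega⟩) := h5
    _ ≤ sasaki (a ⟨0, by omega⟩) (a ⟨n - 1, by omega⟩) := h6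

end Main2

end OLTools

/-- For an ortholattice `α` and `n ≥ 3`, the following are equivalent:
(i) the n-Go equation `a₁ ≡γ aₙ = aₙ ≡γ a₁`;
(ii) `a₁ ≡γ aₙ = (a₁ ≡ a₂) ⊓ ⋯ ⊓ (aₙ₋₁ ≡ aₙ)`;
(iii) `a₁ ≡γ aₙ ≤ a₁ → aₙ`;
(iv) `(a₁ ≡γ aₙ) ⊓ (a₁ ⊔ ⋯ ⊔ aₙ) = a₁ ⊓ ⋯ ⊓ aₙ`. -/
theorem stmt_11 {α : Type*} [Ortholattice α] (n : ℕ) (hn : 3 ≤ n) :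
    ((∀ a : Fin n → α, goFwd n hn a = goBwd n hn a) ↔
      (∀ a : Fin n → α, goFwd n hn a =
        Finset.univ.inf fun i : Fin (n - 1) =>
          oequiv (a ⟨i.1, by have := i.2; omega⟩) (a ⟨i.1 + 1, by have := i.2; omega⟩))) ∧
    ((∀ a : Fin n → α, goFwd n hn a =
        Finset.univ.inf fun i : Fin (n - 1) =>
          oequiv (a ⟨i.1, by have := i.2; omega⟩) (a ⟨i.1 + 1, by have := i.2; omega⟩)) ↔
      (∀ a : Fin n → α, goFwd n hn a ≤ sasaki (a ⟨0, by omega⟩) (a ⟨n - 1, by omega⟩))) ∧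
    ((∀ a : Fin n → α, goFwd n hn a ≤ sasaki (a ⟨0, by omega⟩) (a ⟨n - 1, by omega⟩)) ↔
      (∀ a : Fin n → α,
        goFwd n hn a ⊓ Finset.univ.sup a = Finset.univ.inf a)) := by
  refine ⟨⟨fun hI => OLTools.i_to_ii hn hI, fun hII => OLTools.ii_to_i hn hII⟩,
    ⟨fun hII => OLTools.i_to_iii hn (OLTools.ii_to_i hn hII),
     fun hIII => OLTools.i_to_ii hn (OLTools.iii_to_i hn hIII)⟩,
    ⟨fun hIII => OLTools.iii_to_iv hn hIII, fun hIV => OLTools.iv_to_iii hn hIV⟩⟩
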